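/- Fix an integer k ≥ 1. For every λ with 0 < λ < sin²(π/(4k+2)) and every phase φ ∈ (0,π], one has P_k^φ(λ) < 1; that is, k matched-phase Grover iterations cannot reach certainty for any λ below sin²(π/(4k+2)). -/

import Mathlib

/-- The success probability `P_k^φ(λ)` of the matched-phase Grover algorithm after
`k` iterations: `P_k^φ(λ) = A·cos((2k+1)δ) + B` where `θ = arcsin √λ`,
`δ = arccos (1 − λ(1 − cos φ))`, `A = (sin²θ/sin²δ)(cos φ − cos δ)` and
`B = (sin²θ/sin²δ)(1 − cos φ·cos δ)`. -/
noncomputable def grovP (k : ℕ) (φ lam : ℝ) : ℝ :=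
  let θ : ℝ := Real.arcsin (Real.sqrt lam)
  let δ : ℝ := Real.arccos (1 - lam * (1 - Real.cos φ))
  let A : ℝ := Real.sin θ ^ 2 / Real.sin δ ^ 2 * (Real.cos φ - Real.cos δ)
  let B : ℝ := Real.sin θ ^ 2 / Real.sin δ ^ 2 * (1 - Real.cos φ * Real.cos δ)
  A * Real.cos ((2 * (k : ℝ) + 1) * δ) + B

/-- `φ_k^min = arccos(1 − (2 − 2cos(π/(2k+1)))/(1 − cos(π/(2k−1))))`. -/
noncomputable def phiMin (k : ℕ) : ℝ :=
  Real.arccos (1 - (2 - 2 * Real.cos (Real.pi / (2 * (k : ℝ) + 1))) /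
    (1 - Real.cos (Real.pi / (2 * (k : ℝ) - 1))))

theorem grovP_eq (k : ℕ) (φ lam : ℝ) : grovP k φ lam =
    Real.sin (Real.arcsin (Real.sqrt lam)) ^ 2 /
        Real.sin (Real.arccos (1 - lam * (1 - Real.cos φ))) ^ 2 *
      (Real.cos φ - Real.cos (Real.arccos (1 - lam * (1 - Real.cos φ)))) *
      Real.cos ((2 * (k : ℝ) + 1) * Real.arccos (1 - lam * (1 - Real.cos φ))) +
    Real.sin (Real.arcsin (Real.sqrt lam)) ^ 2 /
        Real.sin (Real.arccos (1 - lam * (1 - Real.cos φ))) ^ 2 *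
      (1 - Real.cos φ * Real.cos (Real.arccos (1 - lam * (1 - Real.cos φ)))) := rfl

/-- For k ≥ 1, every λ with 0 < λ < sin²(π/(4k+2)) and every
φ ∈ (0,π], one has P_k^φ(λ) < 1. -/
theorem no_certainty_below_threshold
    (k : ℕ) (hk : 1 ≤ k) (lam : ℝ)
    (hlam : 0 < lam ∧ lam < Real.sin (Real.pi / (4 * (k : ℝ) + 2)) ^ 2)
    (φ : ℝ) (hφ : φ ∈ Set.Ioc (0 : ℝ) Real.pi) :
    grovP k φ lam < 1 := by
  obtain ⟨hl0, hl1⟩ := hlam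
  obtain ⟨hφ0, hφπ⟩ := hφ
  have hk1 : (1:ℝ) ≤ (k:ℝ) := by exact_mod_cast hk
  have hπ := Real.pi_pos
  obtain ⟨N, hN⟩ : ∃ N : ℝ, N = 2 * (k:ℝ) + 1 := ⟨_, rfl⟩
  have hN1 : (3:ℝ) ≤ N := by rw [hN]; linarith
  have hNpos : (0:ℝ) < N := by linarith
  obtain ⟨μ, hμ⟩ : ∃ μ : ℝ, μ = Real.pi / N := ⟨_, rfl⟩
  have hμpos : 0 < μ := hμ ▸ div_pos hπ hNpos
  have hμπ : μ ≤ Real.pi := by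
    rw [hμ, div_le_iff₀ hNpos]; nlinarith
  -- half angle
  have hhalf : Real.pi / (4 * (k:ℝ) + 2) = μ / 2 := by
    rw [hμ, hN, div_div]
    congr 1; ring
  have hcosμ : Real.cos μ = 1 - 2 * Real.sin (Real.pi / (4 * (k:ℝ) + 2)) ^ 2 := by
    rw [hhalf]
    have h1 : Real.cos (2 * (μ / 2)) = 2 * Real.cos (μ / 2) ^ 2 - 1 := Real.cos_two_mul _
    have h2 := Real.sin_sq_add_cos_sq (μ / 2)
    rw [show 2 * (μ / 2) = μ by ring] at h1
    linarith
  -- cos φ < 1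
  have hcφ1 : Real.cos φ < 1 := by
    have := Real.cos_lt_cos_of_nonneg_of_le_pi (le_refl 0) hφπ hφ0
    simpa using this
  have hcφm1 : -1 ≤ Real.cos φ := Real.neg_one_le_cos φ
  obtain ⟨c, hc⟩ : ∃ c : ℝ, c = 1 - lam * (1 - Real.cos φ) := ⟨_, rfl⟩
  have hc1 : c < 1 := by
    have : 0 < lam * (1 - Real.cos φ) := mul_pos hl0 (by linarith)
    rw [hc]; linarith
  have hμc : Real.cos μ < c := by
    rw [hcosμ, hc]
    nlinarith
  have hcm1 : -1 < c := lt_of_le_of_lt (Real.neg_one_le_cos μ) hμc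
  obtain ⟨δ, hδ⟩ : ∃ δ : ℝ, δ = Real.arccos c := ⟨_, rfl⟩
  have hδpos : 0 < δ := hδ ▸ Real.arccos_pos.2 hc1
  have hδπ : δ ≤ Real.pi := hδ ▸ Real.arccos_le_pi c
  have hcosδ : Real.cos δ = c := hδ ▸ Real.cos_arccos hcm1.le hc1.le
  have hδμ : δ < μ := by
    by_contra h
    push_neg at h
    rcases eq_or_lt_of_le h with h' | h'
    · rw [h', hcosδ] at hμc; exact lt_irrefl _ hμc
    · have := Real.cos_lt_cos_of_nonneg_of_le_pi hμpos.le hδπ h'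
      rw [hcosδ] at this; linarith
  -- N * δ ∈ (0, π)
  have hNδπ : N * δ < Real.pi := by
    have : N * δ < N * μ := by exact mul_lt_mul_of_pos_left hδμ hNpos
    rw [hμ] at this
    rw [mul_div_cancel₀ _ (ne_of_gt hNpos)] at this
    exact this
  have hNδ0 : 0 < N * δ := mul_pos hNpos hδpos
  obtain ⟨x, hx⟩ : ∃ x : ℝ, x = Real.cos (N * δ) := ⟨_, rfl⟩
  have hxm1 : -1 < x := by
    have := Real.cos_lt_cos_of_nonneg_of_le_pi hNδ0.le (le_refl Real.pi) hNδπ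
    rw [Real.cos_pi] at this; rw [hx]; exact this
  have hx1 : x ≤ 1 := hx ▸ Real.cos_le_one _
  -- sin δ ^ 2 = 1 - c ^ 2
  have hsinδ : Real.sin δ ^ 2 = 1 - c ^ 2 := by
    rw [hδ, Real.sin_arccos, Real.sq_sqrt (by nlinarith)]
  have h1c2 : 0 < 1 - c ^ 2 := by nlinarith
  -- sin θ ^ 2 = lam
  have hlam1 : lam < 1 := by
    have := Real.sin_sq_le_one (Real.pi / (4 * (k:ℝ) + 2))
    linarith
  have hsinθ : Real.sin (Real.arcsin (Real.sqrt lam)) ^ 2 = lam := by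
    rw [Real.sin_arcsin (le_trans (by norm_num) (Real.sqrt_nonneg lam)) (by
      rw [show (1:ℝ) = Real.sqrt 1 by simp]
      exact Real.sqrt_le_sqrt hlam1.le)]
    exact Real.sq_sqrt hl0.le
  -- unfold grovP
  have hgoal : grovP k φ lam = lam / (1 - c ^ 2) * (Real.cos φ - c) * x +
      lam / (1 - c ^ 2) * (1 - Real.cos φ * c) := by
    rw [grovP_eq, ← hc, ← hδ, ← hN, hsinθ, hsinδ, hcosδ, ← hx]
  rw [hgoal]
  have key : lam * ((Real.cos φ - c) * x + (1 - Real.cos φ * c)) < 1 - c ^ 2 := by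
    have expand : (1 - c ^ 2) - lam * ((Real.cos φ - c) * x + (1 - Real.cos φ * c))
        = lam * (1 - Real.cos φ) * (1 - lam) * (1 + x) := by
      rw [hc]; ring
    have hpos : 0 < lam * (1 - Real.cos φ) * (1 - lam) * (1 + x) :=
      mul_pos (mul_pos (mul_pos hl0 (by linarith)) (by linarith)) (by linarith)
    linarith
  have heq : lam / (1 - c ^ 2) * (Real.cos φ - c) * x + lam / (1 - c ^ 2) * (1 - Real.cos φ * c)
      = lam * ((Real.cos φ - c) * x + (1 - Real.cos φ * c)) / (1 - c ^ 2) := by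
    field_simp
  rw [heq, div_lt_one h1c2]
  exact key
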